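/- Let Φ : [0,∞) → ℝ be a bounded, nonincreasing, nonnegative function with ∫_ℝ Φ(|x|) dx < ∞, and let φ : ℝ → ℂ be measurable with |φ(x)| ≤ Φ(|x|) for almost every x ∈ ℝ. Define h_k = √2 ∫_ℝ φ(u) · conj(φ(2u − k)) du for k ∈ ℤ. Then for every k ∈ ℤ, |h_k| ≤ C · Φ(|k|/3), where C = (3/√2) ∫_ℝ Φ(|u|) du. -/

import Mathlib

open MeasureTheory

/-- Filter-coefficient decay (from the proof of Lemma 2.1): if `|φ| ≤ Φ(|·|)` a.e. with
`Φ` bounded, nonincreasing, nonnegative and `∫ Φ(|x|) dx < ∞`, then the low-pass filter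
coefficients `h_k = √2 ∫ φ(u) conj(φ(2u − k)) du` satisfy
`|h_k| ≤ (3/√2 · ∫ Φ(|u|) du) · Φ(|k|/3)`. -/
theorem filter_coefficient_decay
    (Φ : ℝ → ℝ)
    (hΦbdd : ∃ M : ℝ, ∀ x ∈ Set.Ici (0 : ℝ), Φ x ≤ M)
    (hΦanti : AntitoneOn Φ (Set.Ici (0 : ℝ)))
    (hΦnonneg : ∀ x ∈ Set.Ici (0 : ℝ), 0 ≤ Φ x)
    (hΦint : Integrable (fun x : ℝ => Φ |x|))
    (φ : ℝ → ℂ) (hφmeas : Measurable φ)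
    (hφdom : ∀ᵐ x : ℝ, ‖φ x‖ ≤ Φ |x|)
    (h : ℤ → ℂ)
    (hh : ∀ k : ℤ, h k =
      (Real.sqrt 2 : ℂ) * ∫ u : ℝ, φ u * (starRingEnd ℂ) (φ (2 * u - k))) :
    ∀ k : ℤ, ‖h k‖ ≤ (3 / Real.sqrt 2 * ∫ u : ℝ, Φ |u|) * Φ (|(k : ℝ)| / 3) := by
  intro k
  set c := Φ (|(k : ℝ)| / 3) with hc_def
  have hk3 : |(k : ℝ)| / 3 ∈ Set.Ici (0 : ℝ) := by
    simp [Set.mem_Ici]; positivity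
  have hc0 : 0 ≤ c := hΦnonneg _ hk3
  -- quasi measure preserving of u ↦ 2u - k
  have qmp : Measure.QuasiMeasurePreserving (fun u : ℝ => 2 * u - (k : ℝ))
      volume volume := by
    have h1 : Measure.QuasiMeasurePreserving (fun u : ℝ => 2 * u) volume volume := by
      refine ⟨(measurable_const_mul 2), ?_⟩
      rw [Real.map_volume_mul_left (two_ne_zero)]
      refine Measure.AbsolutelyContinuous.mk fun s _ hs => ?_
      simp [hs]
    have h2 := (measurePreserving_sub_right (volume : Measure ℝ) (k : ℝ)).quasiMeasurePreserving
    exact h2.comp h1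
  have hφdom2 : ∀ᵐ u : ℝ, ‖φ (2 * u - (k : ℝ))‖ ≤ Φ |2 * u - (k : ℝ)| := qmp.ae hφdom
  -- integrability of the dominating functions
  have hint2 : Integrable (fun u : ℝ => Φ |2 * u - (k : ℝ)|) := by
    have := (hΦint.comp_sub_right (k : ℝ)).comp_mul_left' (R := 2) two_ne_zero
    simpa using this
  have hintg : Integrable (fun u : ℝ => c * (Φ |u| + Φ |2 * u - (k : ℝ)|)) :=
    (hΦint.add hint2).const_mul c
  -- pointwise bound
  have key : ∀ᵐ u : ℝ, ‖φ u * (starRingEnd ℂ) (φ (2 * u - (k : ℝ)))‖ ≤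
      c * (Φ |u| + Φ |2 * u - (k : ℝ)|) := by
    filter_upwards [hφdom, hφdom2] with u h1 h2
    have hΦu : 0 ≤ Φ |u| := hΦnonneg _ (by simp [Set.mem_Ici, abs_nonneg])
    have hΦv : 0 ≤ Φ |2 * u - (k : ℝ)| := hΦnonneg _ (by simp [Set.mem_Ici, abs_nonneg])
    have hn : ‖φ u * (starRingEnd ℂ) (φ (2 * u - (k : ℝ)))‖ =
        ‖φ u‖ * ‖φ (2 * u - (k : ℝ))‖ := by
      rw [norm_mul, RingHomIsometric.norm_map]
    rw [hn]
    have hprod : ‖φ u‖ * ‖φ (2 * u - (k : ℝ))‖ ≤ Φ |u| * Φ |2 * u - (k : ℝ)| :=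
      mul_le_mul h1 h2 (norm_nonneg _) hΦu
    refine hprod.trans ?_
    by_cases hcase : |(k : ℝ)| / 3 ≤ |u|
    · have hle : Φ |u| ≤ c := hΦanti hk3 (by simp [Set.mem_Ici, abs_nonneg]) hcase
      calc Φ |u| * Φ |2 * u - (k : ℝ)| ≤ c * Φ |2 * u - (k : ℝ)| :=
            mul_le_mul_of_nonneg_right hle hΦv
        _ ≤ c * (Φ |u| + Φ |2 * u - (k : ℝ)|) := by nlinarith
    · push_neg at hcase
      have habs : |(k : ℝ)| / 3 ≤ |2 * u - (k : ℝ)| := by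
        have h3 : |(k : ℝ)| ≤ |2 * u| + |2 * u - (k : ℝ)| := by
          have := abs_sub_abs_le_abs_sub (2 * u) ((k : ℝ))
          have := abs_sub (2 * u) ((k : ℝ))
          calc |(k : ℝ)| = |2 * u - (2 * u - (k : ℝ))| := by ring_nf
            _ ≤ |2 * u| + |2 * u - (k : ℝ)| := abs_sub _ _
        have h4 : |2 * u| = 2 * |u| := by rw [abs_mul]; simp
        linarith
      have hle : Φ |2 * u - (k : ℝ)| ≤ c :=
        hΦanti hk3 (by simp [Set.mem_Ici, abs_nonneg]) habs
      calc Φ |u| * Φ |2 * u - (k : ℝ)| ≤ Φ |u| * c :=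
            mul_le_mul_of_nonneg_left hle hΦu
        _ ≤ c * (Φ |u| + Φ |2 * u - (k : ℝ)|) := by nlinarith
  -- main estimate
  have hnorm : ‖h k‖ ≤ Real.sqrt 2 * ∫ u : ℝ, c * (Φ |u| + Φ |2 * u - (k : ℝ)|) := by
    rw [hh k, norm_mul]
    have h1 : ‖((Real.sqrt 2 : ℝ) : ℂ)‖ = Real.sqrt 2 := by
      rw [Complex.norm_real, Real.norm_eq_abs, abs_of_nonneg (Real.sqrt_nonneg 2)]
    rw [h1]
    refine mul_le_mul_of_nonneg_left ?_ (Real.sqrt_nonneg 2)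
    calc ‖∫ u : ℝ, φ u * (starRingEnd ℂ) (φ (2 * u - (k : ℝ)))‖
        ≤ ∫ u : ℝ, ‖φ u * (starRingEnd ℂ) (φ (2 * u - (k : ℝ)))‖ :=
          norm_integral_le_integral_norm _
      _ ≤ ∫ u : ℝ, c * (Φ |u| + Φ |2 * u - (k : ℝ)|) :=
          integral_mono_of_nonneg (Filter.Eventually.of_forall fun u => norm_nonneg _)
            hintg key
  -- compute the right-hand integral
  have hI2 : (∫ u : ℝ, Φ |2 * u - (k : ℝ)|) = (1 / 2) * ∫ u : ℝ, Φ |u| := by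
    have e1 : (∫ u : ℝ, Φ |2 * u - (k : ℝ)|)
        = ∫ u : ℝ, (fun x : ℝ => Φ |x - (k : ℝ)|) (2 * u) := by
      congr 1
    rw [e1, Measure.integral_comp_mul_left (fun x : ℝ => Φ |x - (k : ℝ)|) 2]
    rw [integral_sub_right_eq_self (fun x : ℝ => Φ |x|) (μ := volume) (k : ℝ)]
    norm_num
  have hIval : (∫ u : ℝ, c * (Φ |u| + Φ |2 * u - (k : ℝ)|))
      = c * ((3 / 2) * ∫ u : ℝ, Φ |u|) := by
    rw [integral_const_mul, integral_add hΦint hint2, hI2]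
    ring
  rw [hIval] at hnorm
  refine hnorm.trans (le_of_eq ?_)
  have hs : Real.sqrt 2 * Real.sqrt 2 = 2 := Real.mul_self_sqrt (by norm_num)
  have hs0 : Real.sqrt 2 ≠ 0 := by positivity
  have h32 : 3 / Real.sqrt 2 = Real.sqrt 2 * (3 / 2) := by
    rw [div_eq_iff hs0]; nlinarith [hs]
  rw [h32]; ring
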